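/- Let N ≥ 2 and 1 ≤ S ≤ N be integers, let v₁, …, v_N ∈ ℝ^d, and set v̄ = (1/N)·∑_{i=1}^N vᵢ. Then the average of ‖(1/S)·∑_{i∈s} vᵢ‖² over all size-S subsets s of {1, …, N} equals ((N − S)/(S·(N − 1)))·(1/N)·∑_{i=1}^N ‖vᵢ‖² + (N·(S − 1)/(S·(N − 1)))·‖v̄‖². -/

import Mathlib

open Finset

lemma count_sub {α : Type*} [DecidableEq α] [Fintype α] (t : Finset α) (S : ℕ)
    (h : t.card ≤ S) :
    ((powersetCard S (univ : Finset α)).filter (fun s => t ⊆ s)).card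
      = (Fintype.card α - t.card).choose (S - t.card) := by
  have : (Fintype.card α - t.card).choose (S - t.card) = (powersetCard (S - t.card) tᶜ).card := by
    rw [Finset.card_powersetCard, Finset.card_compl]
  rw [this]
  apply Finset.card_bij' (fun s _ => s \ t) (fun u _ => u ∪ t)
  · intro s hs
    simp only [mem_filter, mem_powersetCard] at hs
    simp only [mem_powersetCard]
    constructor
    · intro x hx
      simp only [mem_sdiff] at hx
      simp [hx.2]
    · rw [Finset.card_sdiff_of_subset hs.2, hs.1.2]
  · intro u hu
    simp only [mem_powersetCard] at hu
    have hd : Disjoint u t := by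
      intro x hx1 hx2 y hy
      have := hu.1 (hx1 hy)
      simp at this
      exact absurd (hx2 hy) this
    simp only [mem_filter, mem_powersetCard]
    refine ⟨⟨subset_univ _, ?_⟩, subset_union_right⟩
    rw [Finset.card_union_of_disjoint hd, hu.2]
    omega
  · intro s hs
    simp only [mem_filter, mem_powersetCard] at hs
    exact Finset.sdiff_union_of_subset hs.2
  · intro u hu
    simp only [mem_powersetCard] at hu
    apply Finset.union_sdiff_cancel_right
    intro x hx1 hx2 y hy
    have := hu.1 (hx1 hy)
    simp at this
    exact absurd (hx2 hy) this

theorem stmt_5 {d N S : ℕ} (hN : 2 ≤ N) (hS1 : 1 ≤ S) (hSN : S ≤ N)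
    (v : Fin N → EuclideanSpace ℝ (Fin d))
    (vbar : EuclideanSpace ℝ (Fin d))
    (hvbar : vbar = (N : ℝ)⁻¹ • ∑ i, v i) :
    ((N.choose S : ℝ))⁻¹ *
        ∑ s ∈ powersetCard S (univ : Finset (Fin N)), ‖(S : ℝ)⁻¹ • ∑ i ∈ s, v i‖ ^ 2
      = (((N : ℝ) - (S : ℝ)) / ((S : ℝ) * ((N : ℝ) - 1))) *
          ((N : ℝ)⁻¹ * ∑ i, ‖v i‖ ^ 2)
        + ((N : ℝ) * ((S : ℝ) - 1) / ((S : ℝ) * ((N : ℝ) - 1))) * ‖vbar‖ ^ 2 := by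
  set 𝒮 := powersetCard S (univ : Finset (Fin N)) with h𝒮
  set f : Fin N → Fin N → ℝ := fun i j => inner ℝ (v i) (v j) with hf
  set A : ℝ := ∑ i, ‖v i‖ ^ 2 with hA
  set T : ℝ := ∑ i, ∑ j, f i j with hT
  set c1 : ℕ := (N - 1).choose (S - 1) with hc1
  set c2 : ℕ := if 2 ≤ S then (N - 2).choose (S - 2) else 0 with hc2
  have hNx : (N : ℝ) ≠ 0 := by positivity
  have hSpos : (0:ℕ) < S := hS1
  have hSx : (S : ℝ) ≠ 0 := by positivity
  have hN1 : (N : ℝ) - 1 ≠ 0 := by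
    have : (2 : ℝ) ≤ (N : ℝ) := by exact_mod_cast hN
    linarith
  have hcNpos : 0 < N.choose S := Nat.choose_pos hSN
  have hcN : (N.choose S : ℝ) ≠ 0 := by positivity
  -- norm expansion of each subset term
  have hexp : ∀ s : Finset (Fin N), ‖(S : ℝ)⁻¹ • ∑ i ∈ s, v i‖ ^ 2
      = (S : ℝ)⁻¹ ^ 2 * ∑ i ∈ s, ∑ j ∈ s, f i j := by
    intro s
    rw [norm_smul, mul_pow]
    congr 1
    · simp
    · rw [← real_inner_self_eq_norm_sq, sum_inner]
      exact Finset.sum_congr rfl fun i _ => by rw [inner_sum]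
  have hTnorm : T = ‖∑ i, v i‖ ^ 2 := by
    rw [hT, ← real_inner_self_eq_norm_sq, sum_inner]
    exact Finset.sum_congr rfl fun i _ => by rw [inner_sum]
  have hAf : A = ∑ i, f i i :=
    Finset.sum_congr rfl fun i _ => (real_inner_self_eq_norm_sq _).symm
  -- counting
  have hcount : ∀ i j : Fin N,
      (𝒮.filter (fun s => ({i, j} : Finset (Fin N)) ⊆ s)).card
        = if i = j then c1 else c2 := by
    intro i j
    by_cases hij : i = j
    · subst hij
      rw [if_pos rfl]
      have : ({i, i} : Finset (Fin N)) = {i} := by simp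
      rw [h𝒮]
      simp only [this]
      rw [count_sub {i} S (by simpa using hS1)]
      simp [hc1]
    · rw [if_neg hij]
      have hcard : ({i, j} : Finset (Fin N)).card = 2 := by
        rw [Finset.card_insert_of_notMem (by simp [hij]), Finset.card_singleton]
      by_cases hS2 : 2 ≤ S
      · rw [h𝒮, count_sub {i, j} S (by omega), hcard]
        simp [hc2, hS2]
      · rw [hc2, if_neg hS2]
        rw [Finset.card_eq_zero, Finset.filter_eq_empty_iff]
        intro s hs hsub
        rw [h𝒮, mem_powersetCard] at hs
        have : 2 ≤ s.card := hcard ▸ Finset.card_le_card hsub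
        omega
  -- swap sums
  have key : ∑ s ∈ 𝒮, ∑ i ∈ s, ∑ j ∈ s, f i j
      = ∑ i, ∑ j, (if i = j then (c1 : ℝ) else (c2 : ℝ)) * f i j := by
    have step1 : ∀ s : Finset (Fin N), ∑ i ∈ s, ∑ j ∈ s, f i j
        = ∑ i, ∑ j, if ({i, j} : Finset (Fin N)) ⊆ s then f i j else 0 := by
      intro s
      have : ∀ i j : Fin N,
          (if ({i, j} : Finset (Fin N)) ⊆ s then f i j else 0)
            = if i ∈ s then (if j ∈ s then f i j else 0) else 0 := by
        intro i j
        by_cases h1 : i ∈ s <;> by_cases h2 : j ∈ s <;>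
          simp [Finset.insert_subset_iff, h1, h2]
      simp only [this]
      symm
      simp
    calc ∑ s ∈ 𝒮, ∑ i ∈ s, ∑ j ∈ s, f i j
        = ∑ s ∈ 𝒮, ∑ i, ∑ j, if ({i, j} : Finset (Fin N)) ⊆ s then f i j else 0 :=
          Finset.sum_congr rfl fun s _ => step1 s
      _ = ∑ i, ∑ j, ∑ s ∈ 𝒮, if ({i, j} : Finset (Fin N)) ⊆ s then f i j else 0 := by
          rw [Finset.sum_comm]
          exact Finset.sum_congr rfl fun i _ => Finset.sum_comm
      _ = ∑ i, ∑ j, (if i = j then (c1 : ℝ) else (c2 : ℝ)) * f i j := by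
          refine Finset.sum_congr rfl fun i _ => Finset.sum_congr rfl fun j _ => ?_
          rw [← Finset.sum_filter, Finset.sum_const, nsmul_eq_mul, hcount i j]
          split_ifs <;> simp
  -- split diagonal
  have split : ∑ i, ∑ j, (if i = j then (c1 : ℝ) else (c2 : ℝ)) * f i j
      = (c2 : ℝ) * T + ((c1 : ℝ) - (c2 : ℝ)) * A := by
    have : ∀ i j : Fin N, (if i = j then (c1 : ℝ) else (c2 : ℝ)) * f i j
        = (c2 : ℝ) * f i j + (if i = j then ((c1 : ℝ) - c2) * f i j else 0) := by
      intro i j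
      split_ifs <;> ring
    simp only [this, Finset.sum_add_distrib, Finset.sum_ite_eq, Finset.mem_univ, if_pos,
      if_true]
    rw [hT, hAf]
    simp [Finset.mul_sum]
  -- Nat identities
  have h1 : N * c1 = N.choose S * S := by
    have := Nat.add_one_mul_choose_eq (N - 1) (S - 1)
    have e1 : N - 1 + 1 = N := by omega
    have e2 : S - 1 + 1 = S := by omega
    simp only [Nat.succ_eq_add_one, e1, e2] at this
    rw [hc1]; omega
  have h2 : (N - 1) * c2 = c1 * (S - 1) := by
    by_cases hS2 : 2 ≤ S
    · have := Nat.add_one_mul_choose_eq (N - 2) (S - 2)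
      have e1 : N - 2 + 1 = N - 1 := by omega
      have e2 : S - 2 + 1 = S - 1 := by omega
      simp only [Nat.succ_eq_add_one, e1, e2] at this
      rw [hc2, if_pos hS2, hc1]; omega
    · have hSeq : S = 1 := by omega
      rw [hc2, if_neg hS2, hSeq]
      simp
  -- cast to ℝ
  have h1ℝ : (N : ℝ) * (c1 : ℝ) = (N.choose S : ℝ) * (S : ℝ) := by exact_mod_cast h1
  have h2ℝ : ((N : ℝ) - 1) * (c2 : ℝ) = (c1 : ℝ) * ((S : ℝ) - 1) := by
    have := congrArg (fun n : ℕ => (n : ℝ)) h2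
    push_cast [Nat.cast_sub (by omega : 1 ≤ N), Nat.cast_sub hS1] at this
    linarith [this]
  have hc1ℝ : (c1 : ℝ) = (N.choose S : ℝ) * (S : ℝ) / (N : ℝ) := by
    field_simp
    linarith [h1ℝ]
  have hc2ℝ : (c2 : ℝ) = (N.choose S : ℝ) * (S : ℝ) * ((S : ℝ) - 1) / ((N : ℝ) * ((N : ℝ) - 1)) := by
    rw [hc1ℝ] at h2ℝ
    field_simp at h2ℝ ⊢
    linarith [h2ℝ]
  -- vbar
  have hvb : ‖vbar‖ ^ 2 = (N : ℝ)⁻¹ ^ 2 * T := by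
    rw [hvbar, norm_smul, mul_pow, hTnorm]
    congr 1
    simp
  -- assemble
  have hLHS : ∑ s ∈ 𝒮, ‖(S : ℝ)⁻¹ • ∑ i ∈ s, v i‖ ^ 2
      = (S : ℝ)⁻¹ ^ 2 * ((c2 : ℝ) * T + ((c1 : ℝ) - (c2 : ℝ)) * A) := by
    rw [Finset.sum_congr rfl fun s _ => hexp s, ← Finset.mul_sum, key, split]
  rw [hLHS, hvb, hc1ℝ, hc2ℝ]
  field_simp
  ring
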